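/- arXiv:1311.3396 — 7 statements merged into one kernel-verified Lean document; each statement's English description precedes it below -/
import Mathlib

section
/- For an input-enabled probabilistic automaton, the lifted transition relation between distributions is left-decomposable: if μ = Σ_{i∈I} p_i·μ_i with I finite, p_i > 0, Σ_i p_i = 1, and μ --a--> ν, then ν can be written as Σ_{i∈I} p_i·ν_i with μ_i --a--> ν_i for every i ∈ I. -/
open Finset

structure ProbDist (S : Type) [Fintype S] where
  f : S → ℝ
  nonneg : ∀ s, 0 ≤ f s
  sum_one : ∑ s, f s = 1

/-- Probability assigned by a distribution to a set of states. -/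
noncomputable def ProbDist.pr {S : Type} [Fintype S] (μ : ProbDist S) (C : Set S) : ℝ :=
  ∑ s, C.indicator μ.f s

/-- μ(A) := Σ_{s : L s = A} μ(s). -/
noncomputable def pOf {S AP : Type} [Fintype S] (L : S → Finset AP) (μ : ProbDist S)
    (A : Finset AP) : ℝ :=
  μ.pr {s | L s = A}

/-- d_AP(μ,ν) := (1/2) Σ_{A ⊆ AP} |μ(A) − ν(A)|. -/
noncomputable def dAP {S AP : Type} [Fintype S] [Fintype AP] [DecidableEq AP]
    (L : S → Finset AP) (μ ν : ProbDist S) : ℝ :=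
  (1 / 2) * ∑ A : Finset AP, |pOf L μ A - pOf L ν A|

/-- A (Segala) probabilistic automaton, image-finite. -/
structure PA (S Act AP : Type) [Fintype S] where
  trans : S → Act → ProbDist S → Prop
  L : S → Finset AP
  imageFinite : ∀ s a, {μ | trans s a μ}.Finite

def PA.InputEnabled {S Act AP : Type} [Fintype S] (M : PA S Act AP) : Prop :=
  ∀ s a, ∃ μ, M.trans s a μ

noncomputable def PA.probOf {S Act AP : Type} [Fintype S] (M : PA S Act AP)
    (μ : ProbDist S) (A : Finset AP) : ℝ := pOf M.L μ A

/-- Combined transition s --a-->_P μ : μ is a convex combination of one-step successors. -/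
def Combined {S Act AP : Type} [Fintype S] (M : PA S Act AP) (s : S) (a : Act)
    (μ : ProbDist S) : Prop :=
  ∃ (n : ℕ) (p : Fin n → ℝ) (ν : Fin n → ProbDist S),
    (∀ i, 0 ≤ p i) ∧ (∑ i, p i = 1) ∧ (∀ i, M.trans s a (ν i)) ∧
    (∀ t, μ.f t = ∑ i, p i * (ν i).f t)

/-- Lifted transition μ --a--> μ' between distributions. -/
def Lifted {S Act AP : Type} [Fintype S] (M : PA S Act AP) (μ : ProbDist S) (a : Act)
    (μ' : ProbDist S) : Prop :=
  ∃ k : S → ProbDist S, (∀ s, 0 < μ.f s → Combined M s a (k s)) ∧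
    (∀ t, μ'.f t = ∑ s, μ.f s * (k s).f t)

/-- ProbDist S carries the topology inherited from ℝ^{|S|}. -/
noncomputable instance {S : Type} [Fintype S] : TopologicalSpace (ProbDist S) :=
  TopologicalSpace.induced (fun μ : ProbDist S => μ.f) inferInstance

theorem stmt3 {S Act AP : Type} [Fintype S] (M : PA S Act AP) (hM : M.InputEnabled)
    {I : Type} [Fintype I] (p : I → ℝ) (hp : ∀ i, 0 < p i) (hp1 : ∑ i, p i = 1)
    (μ : I → ProbDist S) (a : Act) (μc ν : ProbDist S)
    (hμc : ∀ t, μc.f t = ∑ i, p i * (μ i).f t)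
    (h : Lifted M μc a ν) :
    ∃ νi : I → ProbDist S, (∀ i, Lifted M (μ i) a (νi i)) ∧
      ∀ t, ν.f t = ∑ i, p i * (νi i).f t := by
  classical
  obtain ⟨k, hk, hν⟩ := h
  have hcomb : ∀ s, ∃ d : ProbDist S, Combined M s a d := by
    intro s
    obtain ⟨d, hd⟩ := hM s a
    exact ⟨d, 1, fun _ => 1, fun _ => d, fun _ => zero_le_one, by simp,
      fun _ => hd, fun t => by simp⟩
  set k' : S → ProbDist S := fun s => if 0 < μc.f s then k s else (hcomb s).choose with hk'def
  have hk'c : ∀ s, Combined M s a (k' s) := by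
    intro s
    by_cases hs : 0 < μc.f s
    · simpa [hk'def, hs] using hk s hs
    · simpa [hk'def, hs] using (hcomb s).choose_spec
  refine ⟨fun i => ⟨fun t => ∑ s, (μ i).f s * (k' s).f t, ?_, ?_⟩, ?_, ?_⟩
  · intro t
    exact Finset.sum_nonneg fun s _ => mul_nonneg ((μ i).nonneg s) ((k' s).nonneg t)
  · rw [Finset.sum_comm]
    simp [← Finset.mul_sum, (k' _).sum_one, (μ i).sum_one]
  · intro i
    exact ⟨k', fun s _ => hk'c s, fun t => rfl⟩
  · intro t
    have h1 : ν.f t = ∑ s, μc.f s * (k' s).f t := by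
      rw [hν t]
      refine Finset.sum_congr rfl fun s _ => ?_
      by_cases hs : 0 < μc.f s
      · simp [hk'def, hs]
      · have : μc.f s = 0 := le_antisymm (not_lt.mp hs) (μc.nonneg s)
        simp [this]
    rw [h1]
    simp only [hμc, Finset.sum_mul, mul_assoc]
    rw [Finset.sum_comm]
    simp [Finset.mul_sum]
end

section
/- For an input-enabled probabilistic automaton with finite state set S, the lifted transition relation between distributions is continuous: if μ_i --a--> ν_i for all i, lim_i μ_i = μ and the sequence (ν_i) converges, then μ --a--> lim_i ν_i. -/
open Finset

lemma combined_iff_mem_hull {S Act AP : Type} [Fintype S] (M : PA S Act AP) (s : S) (a : Act)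
    (m : ProbDist S) :
    Combined M s a m ↔ m.f ∈ convexHull ℝ ((fun d : ProbDist S => d.f) '' {μ | M.trans s a μ}) := by
  constructor
  · rintro ⟨n, p, νf, hp0, hp1, htr, heq⟩
    rw [mem_convexHull_iff_exists_fintype]
    refine ⟨Fin n, inferInstance, p, fun i => (νf i).f, hp0, hp1, fun i => ⟨νf i, htr i, rfl⟩, ?_⟩
    funext t
    rw [Finset.sum_apply]
    exact (heq t).symm
  · intro hm
    rw [mem_convexHull_iff_exists_fintype] at hm
    obtain ⟨ι, _, w, z, hw0, hw1, hz, hsum⟩ := hm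
    choose νf hνf hzf using hz
    let e := (Fintype.equivFin ι).symm
    refine ⟨Fintype.card ι, w ∘ e, νf ∘ e, fun i => hw0 _, ?_, fun i => hνf _, fun t => ?_⟩
    · rw [← hw1]; exact Fintype.sum_equiv e _ _ fun i => rfl
    · have := congrFun hsum t
      rw [Finset.sum_apply] at this
      rw [← this]
      refine (Fintype.sum_equiv e _ _ fun i => ?_).symm
      simp [hzf]

theorem stmt4 {S Act AP : Type} [Fintype S] (M : PA S Act AP) (hM : M.InputEnabled)
    (μs νs : ℕ → ProbDist S) (μ ν : ProbDist S) (a : Act)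
    (h : ∀ i, Lifted M (μs i) a (νs i))
    (hμ : Filter.Tendsto μs Filter.atTop (nhds μ))
    (hν : Filter.Tendsto νs Filter.atTop (nhds ν)) :
    Lifted M μ a ν := by
  classical
  -- the compact convex set of combined-transition targets from each state
  set T : S → Set (S → ℝ) :=
    fun s => convexHull ℝ ((fun d : ProbDist S => d.f) '' {m | M.trans s a m}) with hT
  have hTcomp : ∀ s, IsCompact (T s) :=
    fun s => ((M.imageFinite s a).image _).isCompact_convexHull (𝕜 := ℝ)
  have hTsub : ∀ s, T s ⊆ stdSimplex ℝ S := by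
    intro s
    refine convexHull_min ?_ (convex_stdSimplex ℝ S)
    rintro _ ⟨d, -, rfl⟩
    exact ⟨d.nonneg, d.sum_one⟩
  -- default successor from input-enabledness
  choose d hd using fun s => hM s a
  choose k hk1 hk2 using h
  -- patched witnesses living in Π s, T s
  set g : ℕ → S → (S → ℝ) :=
    fun i s => if 0 < (μs i).f s then (k i s).f else (d s).f with hg
  have hg_mem : ∀ i, g i ∈ Set.pi Set.univ T := by
    intro i s _
    by_cases hpos : 0 < (μs i).f s
    · simpa [hg, hpos] using (combined_iff_mem_hull M s a (k i s)).1 (hk1 i s hpos)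
    · have hmem : (d s).f ∈ (fun x : ProbDist S => x.f) '' {m | M.trans s a m} :=
        ⟨d s, hd s, rfl⟩
      simpa [hg, hpos] using subset_convexHull ℝ _ hmem
  have hg_sum : ∀ i t, (νs i).f t = ∑ s, (μs i).f s * g i s t := by
    intro i t
    rw [hk2 i t]
    refine Finset.sum_congr rfl fun s _ => ?_
    by_cases hpos : 0 < (μs i).f s
    · simp [hg, hpos]
    · have h0 : (μs i).f s = 0 := le_antisymm (not_lt.1 hpos) ((μs i).nonneg s)
      simp [h0]
  -- extract a convergent subsequence in the compact product
  have hC : IsCompact (Set.pi Set.univ T) := isCompact_univ_pi hTcomp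
  obtain ⟨G, hGmem, φ, hφ, hGconv⟩ := hC.tendsto_subseq hg_mem
  -- the limit witnesses
  have hGsimplex : ∀ s, G s ∈ stdSimplex ℝ S := fun s => hTsub s (hGmem s trivial)
  set K : S → ProbDist S := fun s => ⟨G s, (hGsimplex s).1, (hGsimplex s).2⟩ with hK
  refine ⟨K, fun s _ => (combined_iff_mem_hull M s a (K s)).2 (hGmem s trivial), fun t => ?_⟩
  -- pointwise convergence of μs and νs
  have hμf : Filter.Tendsto (fun i => (μs i).f) Filter.atTop (nhds μ.f) :=
    (continuous_induced_dom.tendsto μ).comp hμ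
  have hνf : Filter.Tendsto (fun i => (νs i).f) Filter.atTop (nhds ν.f) :=
    (continuous_induced_dom.tendsto ν).comp hν
  have hμpt : ∀ s, Filter.Tendsto (fun n => (μs (φ n)).f s) Filter.atTop (nhds (μ.f s)) :=
    fun s => ((tendsto_pi_nhds.1 hμf s).comp hφ.tendsto_atTop)
  have hνpt : Filter.Tendsto (fun n => (νs (φ n)).f t) Filter.atTop (nhds (ν.f t)) :=
    (tendsto_pi_nhds.1 hνf t).comp hφ.tendsto_atTop
  have hGpt : ∀ s, Filter.Tendsto (fun n => g (φ n) s t) Filter.atTop (nhds (G s t)) := by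
    intro s
    exact tendsto_pi_nhds.1 (tendsto_pi_nhds.1 hGconv s) t
  have hsum : Filter.Tendsto (fun n => ∑ s, (μs (φ n)).f s * g (φ n) s t)
      Filter.atTop (nhds (∑ s, μ.f s * G s t)) :=
    tendsto_finset_sum _ fun s _ => (hμpt s).mul (hGpt s)
  have : Filter.Tendsto (fun n => (νs (φ n)).f t) Filter.atTop (nhds (∑ s, μ.f s * G s t)) := by
    simpa only [hg_sum] using hsum
  exact tendsto_nhds_unique hνpt this
end

section
/- For an input-enabled probabilistic automaton, distribution-based bisimilarity ∼ is linear: if I is finite, (p_i) is a probability distribution on I, and μ_i ∼ ν_i for each i, then Σ_i p_i·μ_i ∼ Σ_i p_i·ν_i. -/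
open Finset

/-- Distribution-based bisimulation. -/
def IsBisim {S Act AP : Type} [Fintype S] (M : PA S Act AP)
    (R : ProbDist S → ProbDist S → Prop) : Prop :=
  Symmetric R ∧ ∀ μ ν, R μ ν →
    (∀ A : Finset AP, M.probOf μ A = M.probOf ν A) ∧
    (∀ a μ', Lifted M μ a μ' → ∃ ν', Lifted M ν a ν' ∧ R μ' ν')

/-- Distribution-based bisimilarity. -/
def Bisimilar {S Act AP : Type} [Fintype S] (M : PA S Act AP) (μ ν : ProbDist S) : Prop :=
  ∃ R, IsBisim M R ∧ R μ ν

section Aux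

variable {S Act AP : Type} [Fintype S]

lemma combined_trans (M : PA S Act AP) (s : S) (a : Act) (μ : ProbDist S)
    (h : M.trans s a μ) : Combined M s a μ := by
  refine ⟨1, fun _ => 1, fun _ => μ, fun _ => zero_le_one, by simp, fun _ => h, fun t => by simp⟩

lemma combined_convex (M : PA S Act AP) (s : S) (a : Act)
    {ι : Type} [Fintype ι] (w : ι → ℝ) (hw : ∀ i, 0 ≤ w i) (hw1 : ∑ i, w i = 1)
    (χ : ι → ProbDist S) (hχ : ∀ i, Combined M s a (χ i))
    (μ : ProbDist S) (hμ : ∀ t, μ.f t = ∑ i, w i * (χ i).f t) :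
    Combined M s a μ := by
  classical
  choose n q ρ hq hq1 htr heq using hχ
  let e := Fintype.equivFin (Σ i : ι, Fin (n i))
  refine ⟨Fintype.card (Σ i : ι, Fin (n i)),
    fun j => w (e.symm j).1 * q _ (e.symm j).2,
    fun j => ρ _ (e.symm j).2, fun j => mul_nonneg (hw _) (hq _ _), ?_, fun j => htr _ _, ?_⟩
  · rw [Equiv.sum_comp e.symm (fun x : Σ i : ι, Fin (n i) => w x.1 * q x.1 x.2)]
    rw [← Finset.univ_sigma_univ, Finset.sum_sigma]
    rw [← hw1]
    refine Finset.sum_congr rfl fun i _ => ?_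
    show ∑ j : Fin (n i), w i * q i j = w i
    rw [← Finset.mul_sum, hq1 i, mul_one]
  · intro t
    rw [hμ t]
    rw [Equiv.sum_comp e.symm (fun x : Σ i : ι, Fin (n i) => w x.1 * q x.1 x.2 * (ρ x.1 x.2).f t)]
    rw [← Finset.univ_sigma_univ, Finset.sum_sigma]
    refine Finset.sum_congr rfl fun i _ => ?_
    show w i * (χ i).f t = ∑ j : Fin (n i), w i * q i j * (ρ i j).f t
    rw [heq i t, Finset.mul_sum]
    exact Finset.sum_congr rfl fun j _ => by ring

/-- Mixture of finitely many distributions. -/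
noncomputable def mix {I : Type} [Fintype I] (q : I → ℝ) (hq : ∀ i, 0 ≤ q i)
    (hq1 : ∑ i, q i = 1) (α : I → ProbDist S) : ProbDist S :=
  ⟨fun t => ∑ i, q i * (α i).f t,
   fun t => Finset.sum_nonneg fun i _ => mul_nonneg (hq i) ((α i).nonneg t),
   by rw [Finset.sum_comm]
      calc ∑ i, ∑ t, q i * (α i).f t = ∑ i, q i := by
            refine Finset.sum_congr rfl fun i _ => ?_
            rw [← Finset.mul_sum, (α i).sum_one, mul_one]
        _ = 1 := hq1⟩

lemma lifted_convex (M : PA S Act AP) (hM : M.InputEnabled)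
    {ι : Type} [Fintype ι] (a : Act) (w : ι → ℝ) (hw : ∀ i, 0 ≤ w i)
    (α α' : ι → ProbDist S) (hL : ∀ i, Lifted M (α i) a (α' i))
    (β β' : ProbDist S) (hβ : ∀ t, β.f t = ∑ i, w i * (α i).f t)
    (hβ' : ∀ t, β'.f t = ∑ i, w i * (α' i).f t) :
    Lifted M β a β' := by
  classical
  choose k hk hkeq using hL
  choose d hdt using fun s => hM s a
  set K : ι → S → ProbDist S := fun i s => if 0 < (α i).f s then k i s else d s with hK
  have hKc : ∀ i s, Combined M s a (K i s) := by
    intro i s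
    by_cases h : 0 < (α i).f s
    · simpa [hK, h] using hk i s h
    · simpa [hK, h] using combined_trans M s a (d s) (hdt s)
  have hKeq : ∀ i t, (α' i).f t = ∑ s, (α i).f s * (K i s).f t := by
    intro i t; rw [hkeq i t]
    refine Finset.sum_congr rfl fun s _ => ?_
    by_cases h : 0 < (α i).f s
    · simp [hK, h]
    · have h0 : (α i).f s = 0 := le_antisymm (not_lt.mp h) ((α i).nonneg s)
      simp [h0]
  set g : S → S → ℝ := fun s t => ∑ i, w i * (α i).f s * (K i s).f t with hg
  have hgnn : ∀ s t, 0 ≤ g s t := fun s t => Finset.sum_nonneg fun i _ =>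
    mul_nonneg (mul_nonneg (hw i) ((α i).nonneg s)) ((K i s).nonneg t)
  have hgsum : ∀ s, ∑ t, g s t = β.f s := by
    intro s
    rw [show (∑ t, g s t) = ∑ i, ∑ t, w i * (α i).f s * (K i s).f t from Finset.sum_comm, hβ s]
    refine Finset.sum_congr rfl fun i _ => ?_
    rw [← Finset.mul_sum, (K i s).sum_one, mul_one]
  have hgz : ∀ s, β.f s = 0 → ∀ t, g s t = 0 := by
    intro s hs t
    have h0 : ∀ i ∈ Finset.univ, w i * (α i).f s = 0 := by
      refine (Finset.sum_eq_zero_iff_of_nonneg fun i _ =>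
        mul_nonneg (hw i) ((α i).nonneg s)).mp ?_
      rw [← hβ s, hs]
    exact Finset.sum_eq_zero fun i _ => by rw [h0 i (Finset.mem_univ i), zero_mul]
  set kk : S → ProbDist S := fun s =>
    if hs : 0 < β.f s then
      ⟨fun t => g s t / β.f s, fun t => div_nonneg (hgnn s t) hs.le,
        by rw [← Finset.sum_div, hgsum s, div_self hs.ne']⟩
    else d s with hkk
  refine ⟨kk, ?_, ?_⟩
  · intro s hs
    rw [hkk]; simp only [dif_pos hs]
    refine combined_convex M s a (fun i => w i * (α i).f s / β.f s)
      (fun i => div_nonneg (mul_nonneg (hw i) ((α i).nonneg s)) hs.le)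
      (by rw [← Finset.sum_div, ← hβ s, div_self hs.ne'])
      (fun i => K i s) (fun i => hKc i s) _ ?_
    intro t
    simp only [hg, Finset.sum_div]
    exact Finset.sum_congr rfl fun i _ => by ring
  · intro t
    have key : ∀ s, β.f s * (kk s).f t = g s t := by
      intro s
      by_cases hs : 0 < β.f s
      · rw [hkk]; simp only [dif_pos hs]
        field_simp
      · have h0 : β.f s = 0 := le_antisymm (not_lt.mp hs) (β.nonneg s)
        rw [h0, zero_mul, hgz s h0 t]
    rw [hβ' t]
    calc ∑ i, w i * (α' i).f t = ∑ i, ∑ s, w i * ((α i).f s * (K i s).f t) := by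
          refine Finset.sum_congr rfl fun i _ => ?_
          rw [hKeq i t, Finset.mul_sum]
      _ = ∑ s, g s t := by
          rw [Finset.sum_comm]
          exact Finset.sum_congr rfl fun s _ => Finset.sum_congr rfl fun i _ => by ring
      _ = ∑ s, β.f s * (kk s).f t := by
          exact Finset.sum_congr rfl fun s _ => (key s).symm

lemma pOf_convex {AP' I : Type} [Fintype I] (L : S → Finset AP')
    (q : I → ℝ) (α' : I → ProbDist S) (α : ProbDist S)
    (hα : ∀ t, α.f t = ∑ i, q i * (α' i).f t) (A : Finset AP') :
    pOf L α A = ∑ i, q i * pOf L (α' i) A := by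
  classical
  unfold pOf ProbDist.pr
  simp only [Set.indicator_apply, Set.mem_setOf_eq]
  calc (∑ s, if L s = A then α.f s else 0)
      = ∑ s, ∑ i, (if L s = A then q i * (α' i).f s else 0) := by
        refine Finset.sum_congr rfl fun s _ => ?_
        split_ifs with hs
        · rw [hα s]
        · simp
    _ = ∑ i, q i * ∑ s, (if L s = A then (α' i).f s else 0) := by
        rw [Finset.sum_comm]
        refine Finset.sum_congr rfl fun i _ => ?_
        rw [Finset.mul_sum]
        exact Finset.sum_congr rfl fun s _ => by split_ifs <;> simp

lemma bisimilar_symm (M : PA S Act AP) {α β : ProbDist S} (h : Bisimilar M α β) :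
    Bisimilar M β α := by
  obtain ⟨R, hR, hab⟩ := h
  exact ⟨R, hR, hR.1 hab⟩

end Aux

theorem stmt5 {S Act AP : Type} [Fintype S] (M : PA S Act AP) (hM : M.InputEnabled)
    {I : Type} [Fintype I] (p : I → ℝ) (hp : ∀ i, 0 ≤ p i) (hp1 : ∑ i, p i = 1)
    (μ ν : I → ProbDist S) (h : ∀ i, Bisimilar M (μ i) (ν i))
    (μc νc : ProbDist S) (hμc : ∀ t, μc.f t = ∑ i, p i * (μ i).f t)
    (hνc : ∀ t, νc.f t = ∑ i, p i * (ν i).f t) :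
    Bisimilar M μc νc := by
  classical
  refine ⟨fun α β => ∃ (q : I → ℝ) (α' β' : I → ProbDist S),
      (∀ i, 0 ≤ q i) ∧ (∑ i, q i = 1) ∧ (∀ i, Bisimilar M (α' i) (β' i)) ∧
      (∀ t, α.f t = ∑ i, q i * (α' i).f t) ∧ (∀ t, β.f t = ∑ i, q i * (β' i).f t),
    ⟨?_, ?_⟩, p, μ, ν, hp, hp1, h, hμc, hνc⟩
  · rintro α β ⟨q, α', β', h0, h1, h2, h3, h4⟩
    exact ⟨q, β', α', h0, h1, fun i => bisimilar_symm M (h2 i), h4, h3⟩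
  · rintro α β ⟨q, α', β', h0, h1, h2, h3, h4⟩
    constructor
    · intro A
      show pOf M.L α A = pOf M.L β A
      rw [pOf_convex M.L q α' α h3 A, pOf_convex M.L q β' β h4 A]
      refine Finset.sum_congr rfl fun i _ => ?_
      obtain ⟨R, ⟨hsym, hstep⟩, hR⟩ := h2 i
      exact congrArg (fun x => q i * x) ((hstep _ _ hR).1 A)
    · intro a αs hLa
      obtain ⟨k, hk, hkeq⟩ := hLa
      choose d hdt using fun s => hM s a
      set k' : S → ProbDist S := fun s => if 0 < α.f s then k s else d s with hk'
      have hk'c : ∀ s, Combined M s a (k' s) := by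
        intro s
        by_cases hs : 0 < α.f s
        · simpa [hk', hs] using hk s hs
        · simpa [hk', hs] using combined_trans M s a (d s) (hdt s)
      have hαs : ∀ t, αs.f t = ∑ s, α.f s * (k' s).f t := by
        intro t; rw [hkeq t]
        refine Finset.sum_congr rfl fun s _ => ?_
        by_cases hs : 0 < α.f s
        · simp [hk', hs]
        · have h0 : α.f s = 0 := le_antisymm (not_lt.mp hs) (α.nonneg s)
          simp [h0]
      set αs' : I → ProbDist S := fun i =>
        mix (α' i).f (α' i).nonneg (α' i).sum_one k' with hαs'
      have hLi : ∀ i, Lifted M (α' i) a (αs' i) :=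
        fun i => ⟨k', fun s _ => hk'c s, fun t => rfl⟩
      have hdecomp : ∀ t, αs.f t = ∑ i, q i * (αs' i).f t := by
        intro t
        rw [hαs t]
        calc ∑ s, α.f s * (k' s).f t
            = ∑ s, ∑ i, q i * ((α' i).f s * (k' s).f t) := by
              refine Finset.sum_congr rfl fun s _ => ?_
              rw [h3 s, Finset.sum_mul]
              exact Finset.sum_congr rfl fun i _ => by ring
          _ = ∑ i, q i * (αs' i).f t := by
              rw [Finset.sum_comm]
              refine Finset.sum_congr rfl fun i _ => ?_
              rw [show (αs' i).f t = ∑ s, (α' i).f s * (k' s).f t from rfl, Finset.mul_sum]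
      have htrans : ∀ i, ∃ βsi, Lifted M (β' i) a βsi ∧ Bisimilar M (αs' i) βsi := by
        intro i
        obtain ⟨R, ⟨hsym, hstep⟩, hR⟩ := h2 i
        obtain ⟨βsi, hLb, hRb⟩ := (hstep _ _ hR).2 a (αs' i) (hLi i)
        exact ⟨βsi, hLb, R, ⟨hsym, hstep⟩, hRb⟩
      choose βs' hLb hBis using htrans
      refine ⟨mix q h0 h1 βs', ?_, q, αs', βs', h0, h1, hBis, hdecomp, fun t => rfl⟩
      exact lifted_convex M hM a q h0 β' βs' hLb β (mix q h0 h1 βs') h4 (fun t => rfl)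
end

section
/- For an input-enabled probabilistic automaton where AP = Act and L(s) = Act(s) (the set of enabled actions of s) for each state s, probabilistic bisimilarity lifted to distributions implies distribution-based bisimilarity: μ ∼_P ν implies μ ∼ ν. -/
open Finset

/-- Probabilistic bisimulation (Segala), state-based. -/
def IsPBisim {S Act AP : Type} [Fintype S] (M : PA S Act AP) (R : S → S → Prop) : Prop :=
  Equivalence R ∧ ∀ s r, R s r → M.L s = M.L r ∧
    ∀ a μ, M.trans s a μ → ∃ ν, Combined M r a ν ∧
      ∀ t, μ.pr {u | R t u} = ν.pr {u | R t u}

def PBisimilar {S Act AP : Type} [Fintype S] (M : PA S Act AP) (s r : S) : Prop :=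
  ∃ R, IsPBisim M R ∧ R s r

/-- μ ∼_P ν : equal probability on every class of the largest probabilistic bisimulation. -/
def PBisimilarD {S Act AP : Type} [Fintype S] (M : PA S Act AP) (μ ν : ProbDist S) : Prop :=
  ∀ t, μ.pr {u | PBisimilar M t u} = ν.pr {u | PBisimilar M t u}

section helpers
variable {S : Type} [Fintype S]

open Classical in
lemma pr_def (μ : ProbDist S) (C : Set S) :
    μ.pr C = ∑ s, if s ∈ C then μ.f s else 0 := by
  simp [ProbDist.pr, Set.indicator_apply]

lemma pr_nonneg (μ : ProbDist S) (C : Set S) : 0 ≤ μ.pr C := by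
  classical
  rw [pr_def]
  exact Finset.sum_nonneg fun s _ => by split <;> simp [μ.nonneg]

lemma pr_pos (μ : ProbDist S) (C : Set S) {r : S} (hr : r ∈ C) (h : 0 < μ.f r) :
    0 < μ.pr C := by
  classical
  rw [pr_def]
  have := Finset.single_le_sum (f := fun s => if s ∈ C then μ.f s else 0)
    (fun s _ => by split <;> simp [μ.nonneg]) (Finset.mem_univ r)
  simp only [if_pos hr] at this
  linarith

/-- Lemma A: equal on classes of an equivalence implies equal on closed sets. -/
lemma pr_eq_of_closed {R : S → S → Prop} (hR : Equivalence R)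
    {μ ν : ProbDist S} (h : ∀ t, μ.pr {u | R t u} = ν.pr {u | R t u})
    {C : Set S} (hC : ∀ u v, u ∈ C → R u v → v ∈ C) : μ.pr C = ν.pr C := by
  classical
  let st : Setoid S := ⟨R, hR⟩
  have key : ∀ (ρ : ProbDist S),
      ρ.pr C = ∑ q ∈ Finset.univ.image (Quotient.mk st),
        ∑ y ∈ Finset.univ.filter (fun y => ⟦y⟧ = q),
          (if y ∈ C then ρ.f y else 0) := by
    intro ρ
    rw [pr_def]
    exact Finset.sum_partition st
  rw [key μ, key ν]
  refine Finset.sum_congr rfl fun q hq => ?_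
  have hfiber : ∀ ρ : ProbDist S, ∀ y, ⟦y⟧ = q → y ∈ C →
      (∑ y ∈ Finset.univ.filter (fun y => (⟦y⟧ : Quotient st) = q),
        (if y ∈ C then ρ.f y else 0)) = ρ.pr {u | R y u} := by
    intro ρ y hy hyC
    rw [pr_def]
    rw [Finset.sum_filter]
    refine Finset.sum_congr rfl fun z _ => ?_
    by_cases hz : (⟦z⟧ : Quotient st) = q
    · have hRyz : R y z := by
        have : (⟦y⟧ : Quotient st) = ⟦z⟧ := by rw [hy, hz]
        exact Quotient.exact this
      rw [if_pos hz, if_pos (hC y z hyC hRyz), if_pos (by exact hRyz)]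
    · rw [if_neg hz, if_neg]
      intro hRyz
      exact hz (by rw [← hy]; exact Quotient.sound (hR.symm hRyz))
  -- pick representative
  obtain ⟨y, hy⟩ : ∃ y, (⟦y⟧ : Quotient st) = q := Quotient.exists_rep q
  by_cases hyC : y ∈ C
  · rw [hfiber μ y hy hyC, hfiber ν y hy hyC, h y]
  · -- all members of fiber not in C
    refine Finset.sum_congr rfl fun z hz => ?_
    simp only [Finset.mem_filter] at hz
    have hRyz : R y z := Quotient.exact (hy.trans hz.2.symm)
    rw [if_neg, if_neg] <;> exact fun hzC => hyC (hC z y hzC (hR.symm hRyz))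

end helpers

section combined
variable {S Act AP : Type} [Fintype S] {M : PA S Act AP}

lemma pr_mix {ι : Type} [Fintype ι] (p : ι → ℝ) (κ : ι → ProbDist S) (μ : ProbDist S)
    (hμ : ∀ t, μ.f t = ∑ i, p i * (κ i).f t) (C : Set S) :
    μ.pr C = ∑ i, p i * (κ i).pr C := by
  classical
  rw [pr_def]
  have key : ∀ s : S, (if s ∈ C then μ.f s else 0)
      = ∑ i, p i * (if s ∈ C then (κ i).f s else 0) := by
    intro s; split
    · rw [hμ]
    · simp
  rw [Finset.sum_congr rfl fun s _ => key s, Finset.sum_comm]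
  exact Finset.sum_congr rfl fun i _ => by rw [← Finset.mul_sum, pr_def]

lemma combined_of_trans {s a μ} (h : M.trans s a μ) : Combined M s a μ :=
  ⟨1, fun _ => 1, fun _ => μ, fun _ => zero_le_one, by simp, fun _ => h, fun t => by simp⟩

lemma combined_of_fintype {ι : Type} [Fintype ι] {s a} (p : ι → ℝ) (ν : ι → ProbDist S)
    (hp : ∀ i, 0 ≤ p i) (hs : ∑ i, p i = 1) (ht : ∀ i, M.trans s a (ν i))
    (μ : ProbDist S) (hμ : ∀ t, μ.f t = ∑ i, p i * (ν i).f t) : Combined M s a μ := by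
  classical
  let e := Fintype.equivFin ι
  refine ⟨Fintype.card ι, p ∘ e.symm, ν ∘ e.symm, fun i => hp _, ?_, fun i => ht _, fun t => ?_⟩
  · rw [show (p ∘ e.symm) = fun i => p (e.symm i) from rfl]
    rw [e.symm.sum_comp p]
    exact hs
  · rw [hμ t, ← e.symm.sum_comp (fun i => p i * (ν i).f t)]
    rfl

lemma combined_mix {ι : Type} [Fintype ι] {s a} (p : ι → ℝ) (κ : ι → ProbDist S)
    (hp : ∀ i, 0 ≤ p i) (hs : ∑ i, p i = 1)
    (hc : ∀ i, 0 < p i → Combined M s a (κ i))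
    (μ : ProbDist S) (hμ : ∀ t, μ.f t = ∑ i, p i * (κ i).f t) : Combined M s a μ := by
  classical
  -- replace κ at zero-weight indices by a combined one
  obtain ⟨i₀, hi₀⟩ : ∃ i, p i ≠ 0 := by
    by_contra hall
    push_neg at hall
    rw [Finset.sum_congr rfl fun i _ => hall i] at hs
    simp at hs
  have hi₀pos : 0 < p i₀ := lt_of_le_of_ne (hp i₀) (Ne.symm hi₀)
  set κ' : ι → ProbDist S := fun i => if 0 < p i then κ i else κ i₀ with hκ'
  have hcomb : ∀ i, Combined M s a (κ' i) := by
    intro i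
    by_cases h : 0 < p i
    · simpa [hκ', h] using hc i h
    · simpa [hκ', h] using hc i₀ hi₀pos
  have hμ' : ∀ t, μ.f t = ∑ i, p i * (κ' i).f t := by
    intro t
    rw [hμ t]
    refine Finset.sum_congr rfl fun i _ => ?_
    by_cases h : 0 < p i
    · simp [hκ', h]
    · have : p i = 0 := le_antisymm (not_lt.mp h) (hp i)
      simp [this]
  clear hμ hc hκ'
  -- destructure each combined
  choose n q w hq hqs hw hwt using hcomb
  refine combined_of_fintype (ι := Σ i : ι, Fin (n i))
    (fun x => p x.1 * q x.1 x.2) (fun x => w x.1 x.2)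
    (fun x => mul_nonneg (hp x.1) (hq x.1 x.2)) ?_ (fun x => hw x.1 x.2) μ (fun t => ?_)
  · rw [← Finset.univ_sigma_univ, Finset.sum_sigma]
    calc (∑ i, ∑ j, p i * q i j) = ∑ i, p i * ∑ j, q i j := by
          refine Finset.sum_congr rfl fun i _ => ?_; rw [Finset.mul_sum]
      _ = 1 := by
          rw [Finset.sum_congr rfl fun i _ => by rw [hqs i, mul_one]]; exact hs
  · rw [← Finset.univ_sigma_univ, Finset.sum_sigma, hμ' t]
    refine Finset.sum_congr rfl fun i _ => ?_
    rw [hwt i t, Finset.mul_sum]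
    exact Finset.sum_congr rfl fun j _ => by ring

/-- Lemma B: combined transitions are matched across a probabilistic bisimulation. -/
lemma combined_match {R : S → S → Prop} (hR : IsPBisim M R) {s r : S} (hsr : R s r)
    {a : Act} {μ : ProbDist S} (hμ : Combined M s a μ) :
    ∃ ν, Combined M r a ν ∧ ∀ t, μ.pr {u | R t u} = ν.pr {u | R t u} := by
  classical
  obtain ⟨n, p, w, hp, hs, hw, hwt⟩ := hμ
  choose κ hκc hκpr using fun i => (hR.2 s r hsr).2 a (w i) (hw i)
  have hνnn : ∀ t, 0 ≤ ∑ i, p i * (κ i).f t :=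
    fun t => Finset.sum_nonneg fun i _ => mul_nonneg (hp i) ((κ i).nonneg t)
  have hνsum : ∑ t, ∑ i, p i * (κ i).f t = 1 := by
    rw [Finset.sum_comm]
    calc (∑ i, ∑ t, p i * (κ i).f t) = ∑ i, p i := by
          refine Finset.sum_congr rfl fun i _ => ?_
          rw [← Finset.mul_sum, (κ i).sum_one, mul_one]
      _ = 1 := hs
  refine ⟨⟨fun t => ∑ i, p i * (κ i).f t, hνnn, hνsum⟩, ?_, fun t => ?_⟩
  · exact combined_mix p κ hp hs (fun i _ => hκc i) _ (fun t => rfl)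
  · rw [pr_mix p w μ hwt, pr_mix p κ _ (fun t => rfl)]
    exact Finset.sum_congr rfl fun i _ => by rw [hκpr i t]

end combined
section pbisim
variable {S Act AP : Type} [Fintype S] {M : PA S Act AP}

lemma isPBisim_eq : IsPBisim M (Eq : S → S → Prop) := by
  refine ⟨eq_equivalence, fun s r hsr => ?_⟩
  subst hsr
  exact ⟨rfl, fun a μ hμ => ⟨μ, combined_of_trans hμ, fun t => rfl⟩⟩

lemma pbisimilar_refl (s : S) : PBisimilar M s s := ⟨Eq, isPBisim_eq, rfl⟩

lemma pbisimilar_symm {s r : S} : PBisimilar M s r → PBisimilar M r s :=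
  fun ⟨R, hR, hsr⟩ => ⟨R, hR, hR.1.symm hsr⟩

lemma pbisimilar_label {s r : S} (h : PBisimilar M s r) : M.L s = M.L r := by
  obtain ⟨R, hR, hsr⟩ := h; exact (hR.2 s r hsr).1

/-- the transitive closure of probabilistic bisimilarity -/
abbrev TBis (M : PA S Act AP) : S → S → Prop := Relation.TransGen (PBisimilar M)

lemma tbis_symm : Symmetric (TBis M) := by
  intro s r h
  induction h with
  | single h1 => exact .single (pbisimilar_symm h1)
  | tail _ h2 ih => exact (Relation.TransGen.single (pbisimilar_symm h2)).trans ih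

lemma tbis_label {s r : S} (h : TBis M s r) : M.L s = M.L r := by
  induction h with
  | single h1 => exact pbisimilar_label h1
  | tail _ h2 ih => exact ih.trans (pbisimilar_label h2)

lemma step_match {s r : S} (hsr : PBisimilar M s r) {a : Act} {μ : ProbDist S}
    (hμ : Combined M s a μ) :
    ∃ ν, Combined M r a ν ∧ ∀ t, μ.pr {u | TBis M t u} = ν.pr {u | TBis M t u} := by
  obtain ⟨R, hR, hsr'⟩ := hsr
  obtain ⟨ν, hν, hpr⟩ := combined_match hR hsr' hμ
  exact ⟨ν, hν, fun t => pr_eq_of_closed hR.1 hpr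
    (fun u v hu huv => Relation.TransGen.tail hu ⟨R, hR, huv⟩)⟩

lemma tbis_match {s r : S} (h : TBis M s r) {a : Act} {μ : ProbDist S}
    (hμ : Combined M s a μ) :
    ∃ ν, Combined M r a ν ∧ ∀ t, μ.pr {u | TBis M t u} = ν.pr {u | TBis M t u} := by
  induction h with
  | single h1 => exact step_match h1 hμ
  | tail _ h2 ih =>
    obtain ⟨ν₁, hν₁, hp1⟩ := ih
    obtain ⟨ν₂, hν₂, hp2⟩ := step_match h2 hν₁
    exact ⟨ν₂, hν₂, fun t => (hp1 t).trans (hp2 t)⟩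

lemma isPBisim_tbis : IsPBisim M (TBis M) := by
  refine ⟨⟨fun s => .single (pbisimilar_refl s), fun h => tbis_symm h,
    fun h1 h2 => h1.trans h2⟩, fun s r hsr => ⟨tbis_label hsr, fun a μ hμ =>
      tbis_match hsr (combined_of_trans hμ)⟩⟩

lemma pbisimilar_trans {s m r : S} (h1 : PBisimilar M s m) (h2 : PBisimilar M m r) :
    PBisimilar M s r :=
  ⟨TBis M, isPBisim_tbis, (Relation.TransGen.single h1).tail h2⟩

lemma pbisimilar_equiv : Equivalence (PBisimilar M) :=
  ⟨pbisimilar_refl, pbisimilar_symm, pbisimilar_trans⟩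

/-- Lemma D: combined transitions across PBisimilar, classes of PBisimilar. -/
lemma pbis_match {s r : S} (h : PBisimilar M s r) {a : Act} {μ : ProbDist S}
    (hμ : Combined M s a μ) :
    ∃ ν, Combined M r a ν ∧
      ∀ t, μ.pr {u | PBisimilar M t u} = ν.pr {u | PBisimilar M t u} := by
  obtain ⟨R, hR, hsr⟩ := h
  obtain ⟨ν, hν, hpr⟩ := combined_match hR hsr hμ
  refine ⟨ν, hν, fun t => pr_eq_of_closed hR.1 hpr ?_⟩
  exact fun u v hu huv => pbisimilar_trans hu ⟨R, hR, huv⟩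

lemma pbisimilar_class_eq {s r : S} (h : PBisimilar M s r) :
    {u | PBisimilar M r u} = {u | PBisimilar M s u} :=
  Set.ext fun u => ⟨fun hu => pbisimilar_trans h hu,
    fun hu => pbisimilar_trans (pbisimilar_symm h) hu⟩

end pbisim
section main
variable {S Act AP : Type} [Fintype S] {M : PA S Act AP}

/-- transfer of lifted transitions across PBisimilarD -/
lemma lifted_match {μ ν : ProbDist S} (h : PBisimilarD M μ ν) {a : Act} {μ' : ProbDist S}
    (hl : Lifted M μ a μ') : ∃ ν', Lifted M ν a ν' ∧ PBisimilarD M μ' ν' := by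
  classical
  obtain ⟨k, hk, hk'⟩ := hl
  set cls : S → Set S := fun t => {u | PBisimilar M t u} with hcls
  have hmem : ∀ r : S, r ∈ cls r := fun r => pbisimilar_refl r
  -- matching combined transitions
  have hKex : ∀ s r, ∃ κ : ProbDist S, 0 < μ.f s → PBisimilar M s r →
      Combined M r a κ ∧ ∀ t, (k s).pr (cls t) = κ.pr (cls t) := by
    intro s r
    by_cases hc : 0 < μ.f s ∧ PBisimilar M s r
    · obtain ⟨κ, h1, h2⟩ := pbis_match hc.2 (hk s hc.1)
      exact ⟨κ, fun _ _ => ⟨h1, h2⟩⟩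
    · exact ⟨μ', fun h1 h2 => absurd ⟨h1, h2⟩ hc⟩
  choose K hK using hKex
  -- weights
  set w : S → S → ℝ :=
    fun r s => if PBisimilar M s r ∧ 0 < μ.f s then μ.f s / μ.pr (cls r) else 0 with hwdef
  have hwnn : ∀ r s, 0 ≤ w r s := by
    intro r s
    by_cases hc : PBisimilar M s r ∧ 0 < μ.f s
    · rw [hwdef]; dsimp only; rw [if_pos hc]
      exact div_nonneg (μ.nonneg s) (pr_nonneg μ _)
    · rw [hwdef]; dsimp only; rw [if_neg hc]
  have hwzero : ∀ r s, ¬(PBisimilar M s r ∧ 0 < μ.f s) → w r s = 0 := by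
    intro r s hc; rw [hwdef]; dsimp only; rw [if_neg hc]
  have hwval : ∀ r s, PBisimilar M s r → 0 < μ.f s → w r s = μ.f s / μ.pr (cls r) := by
    intro r s h1 h2; rw [hwdef]; dsimp only; rw [if_pos ⟨h1, h2⟩]
  have hwsum : ∀ r, 0 < ν.f r → ∑ s, w r s = 1 := by
    intro r hr
    have hνC : 0 < ν.pr (cls r) := pr_pos ν _ (hmem r) hr
    have hμC : 0 < μ.pr (cls r) := by rw [hcls]; dsimp only; rw [h r]; exact hνC
    have step1 : ∀ s, w r s =
        (if s ∈ cls r then μ.f s else 0) * (μ.pr (cls r))⁻¹ := by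
      intro s
      by_cases hP : PBisimilar M r s
      · have hP' : PBisimilar M s r := pbisimilar_symm hP
        rcases (μ.nonneg s).eq_or_lt with hz | hpos
        · rw [hwzero r s (fun hc => absurd hz.symm (ne_of_gt hc.2)),
            if_pos (show s ∈ cls r from hP), ← hz, zero_mul]
        · rw [hwval r s hP' hpos, if_pos (show s ∈ cls r from hP), div_eq_mul_inv]
      · rw [hwzero r s (fun hc => hP (pbisimilar_symm hc.1)),
          if_neg (show s ∉ cls r from hP), zero_mul]
    rw [Finset.sum_congr rfl fun s _ => step1 s, ← Finset.sum_mul, ← pr_def]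
    exact mul_inv_cancel₀ (ne_of_gt hμC)
  -- the matching scheduler for ν
  have hk'nn : ∀ r : S, ∀ t, 0 ≤ ∑ s, w r s * (K s r).f t :=
    fun r t => Finset.sum_nonneg fun s _ => mul_nonneg (hwnn r s) ((K s r).nonneg t)
  have hk'sum : ∀ r : S, 0 < ν.f r → ∑ t, ∑ s, w r s * (K s r).f t = 1 := by
    intro r hr
    rw [Finset.sum_comm]
    calc (∑ s, ∑ t, w r s * (K s r).f t) = ∑ s, w r s := by
          refine Finset.sum_congr rfl fun s _ => ?_
          rw [← Finset.mul_sum, (K s r).sum_one, mul_one]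
      _ = 1 := hwsum r hr
  set k' : S → ProbDist S := fun r =>
    if hr : 0 < ν.f r then ⟨fun t => ∑ s, w r s * (K s r).f t, hk'nn r, hk'sum r hr⟩
    else μ' with hk'def
  have hk'val : ∀ r, 0 < ν.f r → ∀ t, (k' r).f t = ∑ s, w r s * (K s r).f t := by
    intro r hr t
    rw [hk'def]; dsimp only; rw [dif_pos hr]
  have hν'nn : ∀ t, 0 ≤ ∑ r, ν.f r * (k' r).f t :=
    fun t => Finset.sum_nonneg fun r _ => mul_nonneg (ν.nonneg r) ((k' r).nonneg t)
  have hν'sum : ∑ t, ∑ r, ν.f r * (k' r).f t = 1 := by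
    rw [Finset.sum_comm]
    calc (∑ r, ∑ t, ν.f r * (k' r).f t) = ∑ r, ν.f r := by
          refine Finset.sum_congr rfl fun r _ => ?_
          rw [← Finset.mul_sum, (k' r).sum_one, mul_one]
      _ = 1 := ν.sum_one
  refine ⟨⟨fun t => ∑ r, ν.f r * (k' r).f t, hν'nn, hν'sum⟩, ⟨k', ?_, fun t => rfl⟩, ?_⟩
  · -- Combined for each r with positive ν-mass
    intro r hr
    refine combined_mix (w r) (fun s => K s r) (hwnn r) (hwsum r hr) ?_ _ (hk'val r hr)
    intro s hws
    have hc : PBisimilar M s r ∧ 0 < μ.f s := by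
      by_contra hc
      exact absurd (hwzero r s hc) (ne_of_gt hws)
    exact (hK s r hc.2 hc.1).1
  · -- PBisimilarD μ' ν'
    intro t0
    set D : Set S := cls t0 with hD
    have hμ'pr : μ'.pr D = ∑ s, μ.f s * (k s).pr D := pr_mix μ.f k μ' hk' D
    have hν'pr : ProbDist.pr ⟨fun t => ∑ r, ν.f r * (k' r).f t, hν'nn, hν'sum⟩ D
        = ∑ r, ν.f r * (k' r).pr D := pr_mix ν.f k' _ (fun t => rfl) D
    rw [hμ'pr, hν'pr]
    -- step 1: expand (k' r).pr D
    have step1 : ∀ r, ν.f r * (k' r).pr D = ∑ s, ν.f r * (w r s * (k s).pr D) := by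
      intro r
      rcases (ν.nonneg r).eq_or_lt with hz | hr
      · rw [← hz]
        simp
      · have : (k' r).pr D = ∑ s, w r s * (K s r).pr D :=
          pr_mix (w r) (fun s => K s r) (k' r) (hk'val r hr) D
        rw [this, Finset.mul_sum]
        refine Finset.sum_congr rfl fun s _ => ?_
        by_cases hc : PBisimilar M s r ∧ 0 < μ.f s
        · rw [(hK s r hc.2 hc.1).2 t0]
        · rw [hwzero r s hc, zero_mul, zero_mul]
    rw [Finset.sum_congr rfl fun r _ => step1 r, Finset.sum_comm]
    -- step 3: termwise in s
    refine Finset.sum_congr rfl fun s _ => ?_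
    rcases (μ.nonneg s).eq_or_lt with hz | hs
    · rw [← hz, zero_mul]
      symm
      refine Finset.sum_eq_zero fun r _ => ?_
      rw [hwzero r s (fun hc => absurd hz.symm (ne_of_gt hc.2)), zero_mul, mul_zero]
    · have hμCs : 0 < μ.pr (cls s) := pr_pos μ _ (hmem s) hs
      have hterm : ∀ r, ν.f r * (w r s * (k s).pr D)
          = (if r ∈ cls s then ν.f r else 0) * (μ.f s / μ.pr (cls s) * (k s).pr D) := by
        intro r
        by_cases hP : PBisimilar M s r
        · have hEq : μ.pr (cls r) = μ.pr (cls s) := by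
            rw [hcls]; dsimp only; rw [pbisimilar_class_eq hP]
          rw [hwval r s hP hs, hEq, if_pos (show r ∈ cls s from hP)]
        · rw [hwzero r s (fun hc => hP hc.1), if_neg (show r ∉ cls s from hP)]
          ring
      rw [Finset.sum_congr rfl fun r _ => hterm r, ← Finset.sum_mul, ← pr_def]
      have hsym : ν.pr (cls s) = μ.pr (cls s) := (h s).symm
      rw [hsym]
      field_simp

end main
theorem stmt7 {S Act : Type} [Fintype S] (M : PA S Act Act) (hM : M.InputEnabled)
    (hL : ∀ s, (↑(M.L s) : Set Act) = {a | ∃ μ, M.trans s a μ})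
    (μ ν : ProbDist S) (h : PBisimilarD M μ ν) :
    Bisimilar M μ ν := by
  refine ⟨PBisimilarD M, ⟨fun μ₁ ν₁ h₁ t => (h₁ t).symm, fun μ₁ ν₁ h₁ => ⟨?_, ?_⟩⟩, h⟩
  · intro A
    show μ₁.pr {s | M.L s = A} = ν₁.pr {s | M.L s = A}
    refine pr_eq_of_closed pbisimilar_equiv h₁ fun u v hu huv => ?_
    simp only [Set.mem_setOf_eq] at hu ⊢
    rw [← pbisimilar_label huv]
    exact hu
  · intro a μ' hl
    exact lifted_match h₁ hl
end

section
/- The family of approximate bisimilarity relations satisfies a triangle-type property: if μ ∼_{ε₁} ν and ν ∼_{ε₂} ω then μ ∼_{ε₁+ε₂} ω. -/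
open Finset

/-- A (discounted) approximate bisimulation: a family of symmetric relations. -/
def IsApproxBisim {S Act AP : Type} [Fintype S] [Fintype AP] [DecidableEq AP]
    (M : PA S Act AP) (γ : ℝ) (R : ℝ → ProbDist S → ProbDist S → Prop) : Prop :=
  (∀ ε, Symmetric (R ε)) ∧ ∀ ε μ ν, R ε μ ν →
    dAP M.L μ ν ≤ ε ∧
    ∀ a μ', Lifted M μ a μ' → ∃ ν', Lifted M ν a ν' ∧ R (ε / γ) μ' ν'

/-- μ ∼_ε ν. -/
def ApproxBisimilar {S Act AP : Type} [Fintype S] [Fintype AP] [DecidableEq AP]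
    (M : PA S Act AP) (γ : ℝ) (ε : ℝ) (μ ν : ProbDist S) : Prop :=
  ∃ R, IsApproxBisim M γ R ∧ R ε μ ν

/-- The bisimulation distance D_b(μ,ν) = inf {ε ≥ 0 : μ ∼_ε ν}. -/
noncomputable def Db {S Act AP : Type} [Fintype S] [Fintype AP] [DecidableEq AP]
    (M : PA S Act AP) (γ : ℝ) (μ ν : ProbDist S) : ℝ :=
  sInf {ε | 0 ≤ ε ∧ ApproxBisimilar M γ ε μ ν}

lemma dAP_triangle {S AP : Type} [Fintype S] [Fintype AP] [DecidableEq AP]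
    (L : S → Finset AP) (μ ν ω : ProbDist S) :
    dAP L μ ω ≤ dAP L μ ν + dAP L ν ω := by
  unfold dAP
  rw [← mul_add, ← Finset.sum_add_distrib]
  apply mul_le_mul_of_nonneg_left _ (by norm_num : (0:ℝ) ≤ 1/2)
  apply Finset.sum_le_sum
  intro A _
  exact abs_sub_le _ _ _

lemma approxBisimilar_symm {S Act AP : Type} [Fintype S] [Fintype AP] [DecidableEq AP]
    {M : PA S Act AP} {γ ε : ℝ} {μ ν : ProbDist S}
    (h : ApproxBisimilar M γ ε μ ν) : ApproxBisimilar M γ ε ν μ := by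
  obtain ⟨R, hR, hμν⟩ := h
  exact ⟨R, hR, hR.1 ε hμν⟩

theorem stmt8 {S Act AP : Type} [Fintype S] [Fintype AP] [DecidableEq AP]
    (M : PA S Act AP) (hM : M.InputEnabled) (γ : ℝ) (hγ0 : 0 < γ) (hγ1 : γ ≤ 1)
    {ε₁ ε₂ : ℝ} {μ ν ω : ProbDist S}
    (h1 : ApproxBisimilar M γ ε₁ μ ν) (h2 : ApproxBisimilar M γ ε₂ ν ω) :
    ApproxBisimilar M γ (ε₁ + ε₂) μ ω := by
  set T : ℝ → ProbDist S → ProbDist S → Prop := fun ε x z =>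
    ∃ δ₁ δ₂ y, ε = δ₁ + δ₂ ∧ ApproxBisimilar M γ δ₁ x y ∧ ApproxBisimilar M γ δ₂ y z
    with hT
  refine ⟨T, ⟨?_, ?_⟩, ε₁, ε₂, ν, rfl, h1, h2⟩
  · intro ε x z ⟨δ₁, δ₂, y, hε, hxy, hyz⟩
    exact ⟨δ₂, δ₁, y, by linarith, approxBisimilar_symm hyz, approxBisimilar_symm hxy⟩
  · rintro ε x z ⟨δ₁, δ₂, y, hε, ⟨R₁, hR₁, hxy⟩, ⟨R₂, hR₂, hyz⟩⟩
    constructor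
    · calc dAP M.L x z ≤ dAP M.L x y + dAP M.L y z := dAP_triangle _ _ _ _
        _ ≤ δ₁ + δ₂ := add_le_add (hR₁.2 δ₁ x y hxy).1 (hR₂.2 δ₂ y z hyz).1
        _ = ε := hε.symm
    · intro a x' hx'
      obtain ⟨y', hy', hxy'⟩ := (hR₁.2 δ₁ x y hxy).2 a x' hx'
      obtain ⟨z', hz', hyz'⟩ := (hR₂.2 δ₂ y z hyz).2 a y' hy'
      exact ⟨z', hz', δ₁ / γ, δ₂ / γ, y', by rw [hε]; ring,
        ⟨R₁, hR₁, hxy'⟩, ⟨R₂, hR₂, hyz'⟩⟩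
end

section
/- The infimum in the definition of the bisimulation distance is attained: for any distributions μ, ν over the states of an input-enabled probabilistic automaton with finite state set, μ ∼_{D_b(μ,ν)} ν, where D_b(μ,ν) = inf{ε ≥ 0 : μ ∼_ε ν}. -/
open Finset

namespace Stmt10Aux
set_option linter.unusedSectionVars false

open Filter Topology

variable {S Act AP : Type} [Fintype S] [Fintype AP] [DecidableEq AP]

theorem ProbDist.ext' {μ ν : ProbDist S} (h : μ.f = ν.f) : μ = ν := by
  cases μ; cases ν; simpa using h

/-- The embedding of `ProbDist S` into `S → ℝ`. -/
def e : ProbDist S → (S → ℝ) := fun μ => μ.f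

theorem inducing_e : IsInducing (e (S := S)) := ⟨rfl⟩

theorem injective_e : Function.Injective (e (S := S)) := fun _ _ h => ProbDist.ext' h

theorem embedding_e : IsEmbedding (e (S := S)) := ⟨inducing_e, injective_e⟩

theorem continuous_eval (t : S) : Continuous fun μ : ProbDist S => μ.f t :=
  (continuous_apply t).comp inducing_e.continuous

theorem f_le_one (μ : ProbDist S) (s : S) : μ.f s ≤ 1 := by
  rw [← μ.sum_one]
  exact Finset.single_le_sum (fun t _ => μ.nonneg t) (Finset.mem_univ s)

theorem range_e : Set.range (e (S := S)) =
    {g : S → ℝ | (∀ s, 0 ≤ g s) ∧ ∑ s, g s = 1} := by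
  ext g
  constructor
  · rintro ⟨μ, rfl⟩; exact ⟨μ.nonneg, μ.sum_one⟩
  · rintro ⟨h1, h2⟩; exact ⟨⟨g, h1, h2⟩, rfl⟩

theorem isClosed_range_e : IsClosed (Set.range (e (S := S))) := by
  rw [range_e]
  have : {g : S → ℝ | (∀ s, 0 ≤ g s) ∧ ∑ s, g s = 1} =
      (⋂ s, {g : S → ℝ | 0 ≤ g s}) ∩ {g : S → ℝ | ∑ s, g s = 1} := by
    ext g; simp [Set.mem_iInter]
  rw [this]
  exact (isClosed_iInter fun s => isClosed_le continuous_const (continuous_apply s)).inter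
    (isClosed_eq (continuous_finset_sum _ fun s _ => continuous_apply s) continuous_const)

theorem isCompact_range_e : IsCompact (Set.range (e (S := S))) := by
  apply IsCompact.of_isClosed_subset (isCompact_univ_pi fun _ : S => isCompact_Icc (a := (0:ℝ)) (b := 1))
    isClosed_range_e
  rintro g ⟨μ, rfl⟩ s _
  exact ⟨μ.nonneg s, f_le_one μ s⟩

instance : CompactSpace (ProbDist S) := by
  constructor
  rw [embedding_e.isCompact_iff, Set.image_univ]
  exact isCompact_range_e

instance : TopologicalSpace.MetrizableSpace (ProbDist S) := embedding_e.metrizableSpace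

theorem tendsto_probDist {x : ℕ → ProbDist S} {μ : ProbDist S} :
    Tendsto x atTop (𝓝 μ) ↔ ∀ t, Tendsto (fun n => (x n).f t) atTop (𝓝 (μ.f t)) := by
  rw [inducing_e.tendsto_nhds_iff]
  exact tendsto_pi_nhds

/-- Mixture of distributions. -/
noncomputable def mix (ν : ProbDist S) (k : S → ProbDist S) : ProbDist S where
  f t := ∑ s, ν.f s * (k s).f t
  nonneg t := Finset.sum_nonneg fun s _ => mul_nonneg (ν.nonneg s) ((k s).nonneg t)
  sum_one := by
    rw [Finset.sum_comm]
    simp only [← Finset.mul_sum, ProbDist.sum_one, mul_one]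

theorem mix_f (ν : ProbDist S) (k : S → ProbDist S) (t : S) :
    (mix ν k).f t = ∑ s, ν.f s * (k s).f t := rfl

variable (M : PA S Act AP)

theorem trans_combined {s : S} {a : Act} {μ : ProbDist S} (h : M.trans s a μ) :
    Combined M s a μ := by
  refine ⟨1, fun _ => 1, fun _ => μ, fun _ => zero_le_one, by simp, fun _ => h, fun t => by simp⟩

/-- The finite set of one-step successors. -/
noncomputable def F (s : S) (a : Act) : Finset (ProbDist S) := (M.imageFinite s a).toFinset

theorem mem_F {s : S} {a : Act} {μ : ProbDist S} : μ ∈ F M s a ↔ M.trans s a μ :=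
  Set.Finite.mem_toFinset _

theorem combined_iff {s : S} {a : Act} {μ : ProbDist S} :
    Combined M s a μ ↔ ∃ w : ProbDist S → ℝ, (∀ q, 0 ≤ w q) ∧ (∑ q ∈ F M s a, w q = 1) ∧
      ∀ t, μ.f t = ∑ q ∈ F M s a, w q * q.f t := by
  classical
  constructor
  · rintro ⟨n, p, ν, hp, hsum, htr, hf⟩
    have hmaps : ∀ i ∈ (Finset.univ : Finset (Fin n)), ν i ∈ F M s a := fun i _ =>
      (mem_F M).mpr (htr i)
    refine ⟨fun q => ∑ i ∈ Finset.univ.filter (fun i => ν i = q), p i, ?_, ?_, ?_⟩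
    · exact fun q => Finset.sum_nonneg fun i _ => hp i
    · rw [Finset.sum_fiberwise_of_maps_to hmaps]; exact hsum
    · intro t
      rw [hf t, ← Finset.sum_fiberwise_of_maps_to hmaps (fun i => p i * (ν i).f t)]
      refine Finset.sum_congr rfl fun q _ => ?_
      rw [Finset.sum_mul]
      refine Finset.sum_congr rfl fun i hi => ?_
      rw [(Finset.mem_filter.mp hi).2]
  · rintro ⟨w, hw, hsum, hf⟩
    set n := (F M s a).card with hn
    set eqv := (F M s a).equivFin with heqv
    refine ⟨n, fun i => w ((eqv.symm i : ↥(F M s a)) : ProbDist S),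
      fun i => ((eqv.symm i : ↥(F M s a)) : ProbDist S), fun i => hw _, ?_, ?_, ?_⟩
    · rw [Equiv.sum_comp eqv.symm (fun x : ↥(F M s a) => w (x : ProbDist S))]
      rw [Finset.sum_coe_sort (F M s a) w]
      exact hsum
    · exact fun i => (mem_F M).mp (eqv.symm i).2
    · intro t
      rw [hf t, ← Finset.sum_coe_sort (F M s a) (fun q => w q * q.f t)]
      exact (Equiv.sum_comp eqv.symm (fun x : ↥(F M s a) => w (x : ProbDist S) * (x : ProbDist S).f t)).symm

theorem combined_iff' {s : S} {a : Act} {μ : ProbDist S} :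
    Combined M s a μ ↔ ∃ w : ↥(F M s a) → ℝ, (∀ x, 0 ≤ w x) ∧ (∑ x, w x = 1) ∧
      ∀ t, μ.f t = ∑ x : ↥(F M s a), w x * (x : ProbDist S).f t := by
  classical
  rw [combined_iff]
  constructor
  · rintro ⟨w, h0, h1, hf⟩
    refine ⟨fun x => w x, fun x => h0 _, ?_, fun t => ?_⟩
    · rw [Finset.sum_coe_sort]; exact h1
    · rw [hf t, ← Finset.sum_coe_sort (F M s a) (fun q => w q * q.f t)]
  · rintro ⟨w, h0, h1, hf⟩
    refine ⟨fun q => if h : q ∈ F M s a then w ⟨q, h⟩ else 0, fun q => ?_, ?_, fun t => ?_⟩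
    · dsimp only
      split
      · exact h0 _
      · exact le_refl 0
    · rw [← Finset.sum_coe_sort (F M s a) (fun q => if h : q ∈ F M s a then w ⟨q, h⟩ else 0)]
      rw [← h1]
      refine Finset.sum_congr rfl fun x _ => ?_
      rw [dif_pos x.2]
    · rw [hf t, ← Finset.sum_coe_sort (F M s a)
        (fun q => (if h : q ∈ F M s a then w ⟨q, h⟩ else 0) * q.f t)]
      refine Finset.sum_congr rfl fun x _ => ?_
      rw [dif_pos x.2]

theorem isClosed_combined (s : S) (a : Act) : IsClosed {μ : ProbDist S | Combined M s a μ} := by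
  classical
  set φ : (↥(F M s a) → ℝ) → (S → ℝ) :=
    fun w t => ∑ x : ↥(F M s a), w x * (x : ProbDist S).f t with hφ
  set W : Set (↥(F M s a) → ℝ) := {w | (∀ x, 0 ≤ w x) ∧ ∑ x, w x = 1} with hW
  have hWclosed : IsClosed W := by
    have : W = (⋂ x, {w : ↥(F M s a) → ℝ | 0 ≤ w x}) ∩ {w | ∑ x, w x = 1} := by
      ext w; simp [hW, Set.mem_iInter]
    rw [this]
    exact (isClosed_iInter fun x => isClosed_le continuous_const (continuous_apply x)).inter
      (isClosed_eq (continuous_finset_sum _ fun x _ => continuous_apply x) continuous_const)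
  have hWc : IsCompact W := by
    apply IsCompact.of_isClosed_subset
      (isCompact_univ_pi fun _ => isCompact_Icc (a := (0:ℝ)) (b := 1)) hWclosed
    rintro w ⟨h0, h1⟩ x _
    refine ⟨h0 x, ?_⟩
    rw [← h1]
    exact Finset.single_le_sum (fun y _ => h0 y) (Finset.mem_univ x)
  have hφc : Continuous φ := continuous_pi fun t =>
    continuous_finset_sum _ fun x _ => (continuous_apply x).mul continuous_const
  have himg : IsClosed (φ '' W) := (hWc.image hφc).isClosed
  have hset : {μ : ProbDist S | Combined M s a μ} = e ⁻¹' (φ '' W) := by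
    ext μ
    simp only [Set.mem_setOf_eq, Set.mem_preimage, combined_iff' M]
    constructor
    · rintro ⟨w, h0, h1, hf⟩
      exact ⟨w, ⟨h0, h1⟩, funext fun t => (hf t).symm⟩
    · rintro ⟨w, ⟨h0, h1⟩, heq⟩
      exact ⟨w, h0, h1, fun t => (congrFun heq t).symm⟩
  rw [hset]
  exact himg.preimage inducing_e.continuous

/-- A default combined successor, from input-enabledness. -/
noncomputable def dflt (hM : M.InputEnabled) (s : S) (a : Act) : ProbDist S := (hM s a).choose

theorem dflt_combined (hM : M.InputEnabled) (s : S) (a : Act) :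
    Combined M s a (dflt M hM s a) := trans_combined M (hM s a).choose_spec

theorem lifted_mix {ν : ProbDist S} {a : Act} {k : S → ProbDist S}
    (hk : ∀ s, Combined M s a (k s)) : Lifted M ν a (mix ν k) :=
  ⟨k, fun s _ => hk s, fun _ => rfl⟩

theorem exists_lifted (hM : M.InputEnabled) (ν : ProbDist S) (a : Act) :
    ∃ ν', Lifted M ν a ν' :=
  ⟨mix ν fun s => dflt M hM s a, lifted_mix M fun s => dflt_combined M hM s a⟩

theorem lifted_limit (hM : M.InputEnabled) {a : Act} {x y : ℕ → ProbDist S} {ν ν' : ProbDist S}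
    (hx : Tendsto x atTop (𝓝 ν)) (hy : Tendsto y atTop (𝓝 ν'))
    (h : ∀ n, Lifted M (x n) a (y n)) : Lifted M ν a ν' := by
  classical
  choose k hk1 hk2 using h
  set K : ℕ → S → ProbDist S :=
    fun n s => if Combined M s a (k n s) then k n s else dflt M hM s a with hK
  have hKc : ∀ n s, Combined M s a (K n s) := by
    intro n s; rw [hK]; dsimp only; split
    · assumption
    · exact dflt_combined M hM s a
  have hyf : ∀ n t, (y n).f t = ∑ s, (x n).f s * (K n s).f t := by
    intro n t; rw [hk2 n t]
    refine Finset.sum_congr rfl fun s _ => ?_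
    by_cases hc : Combined M s a (k n s)
    · rw [hK]; simp [hc]
    · have h0 : (x n).f s = 0 := by
        by_contra h0
        exact hc (hk1 n s (lt_of_le_of_ne ((x n).nonneg s) (Ne.symm h0)))
      simp [h0]
  obtain ⟨L, φ, hφ, hL⟩ := CompactSpace.tendsto_subseq K
  have hLs : ∀ s, Tendsto (fun n => K (φ n) s) atTop (𝓝 (L s)) :=
    fun s => (tendsto_pi_nhds.mp hL) s
  have hLc : ∀ s, Combined M s a (L s) := fun s =>
    (isClosed_combined M s a).mem_of_tendsto (hLs s) (Eventually.of_forall fun n => hKc _ s)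
  refine ⟨L, fun s _ => hLc s, fun t => ?_⟩
  have h1 : Tendsto (fun n => (y (φ n)).f t) atTop (𝓝 (ν'.f t)) :=
    (tendsto_probDist.mp (hy.comp hφ.tendsto_atTop)) t
  have h2 : Tendsto (fun n => ∑ s, (x (φ n)).f s * (K (φ n) s).f t) atTop
      (𝓝 (∑ s, ν.f s * (L s).f t)) := by
    apply tendsto_finset_sum
    intro s _
    exact ((tendsto_probDist.mp (hx.comp hφ.tendsto_atTop)) s).mul
      (((continuous_eval t).tendsto (L s)).comp (hLs s))
  have heq : (fun n => (y (φ n)).f t) = fun n => ∑ s, (x (φ n)).f s * (K (φ n) s).f t :=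
    funext fun n => hyf (φ n) t
  rw [heq] at h1
  exact tendsto_nhds_unique h1 h2

theorem continuous_dAP (L : S → Finset AP) :
    Continuous fun p : ProbDist S × ProbDist S => dAP L p.1 p.2 := by
  unfold dAP pOf ProbDist.pr
  apply Continuous.mul continuous_const
  apply continuous_finset_sum
  intro A _
  apply Continuous.abs
  apply Continuous.sub <;>
  · apply continuous_finset_sum
    intro s _
    by_cases hs : L s = A
    · have h1 : ∀ μ : ProbDist S, Set.indicator {s | L s = A} μ.f s = μ.f s :=
        fun μ => Set.indicator_of_mem (show s ∈ {s | L s = A} from hs) μ.f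
      simp only [h1]
      first
      | exact (continuous_eval s).comp continuous_fst
      | exact (continuous_eval s).comp continuous_snd
    · have h1 : ∀ μ : ProbDist S, Set.indicator {s | L s = A} μ.f s = 0 :=
        fun μ => Set.indicator_of_notMem (show s ∉ {s | L s = A} from hs) μ.f
      simp only [h1]
      exact continuous_const

theorem pOf_nonneg (L : S → Finset AP) (μ : ProbDist S) (A : Finset AP) : 0 ≤ pOf L μ A :=
  Finset.sum_nonneg fun s _ => Set.indicator_nonneg (fun s _ => μ.nonneg s) s

theorem sum_pOf (L : S → Finset AP) (μ : ProbDist S) : ∑ A : Finset AP, pOf L μ A = 1 := by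
  unfold pOf ProbDist.pr
  rw [Finset.sum_comm]
  have h : ∀ s, ∑ A : Finset AP, Set.indicator {s | L s = A} μ.f s = μ.f s := by
    intro s
    have h1 : ∀ A : Finset AP, Set.indicator {s | L s = A} μ.f s
        = if L s = A then μ.f s else 0 := by
      intro A; by_cases h : L s = A <;> simp [Set.indicator, h]
    simp only [h1]
    simp
  simp only [h]
  exact μ.sum_one

theorem dAP_le_one (L : S → Finset AP) (μ ν : ProbDist S) : dAP L μ ν ≤ 1 := by
  unfold dAP
  have h : ∑ A : Finset AP, |pOf L μ A - pOf L ν A|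
      ≤ ∑ A : Finset AP, (pOf L μ A + pOf L ν A) := by
    apply Finset.sum_le_sum
    intro A _
    have h1 := pOf_nonneg L μ A
    have h2 := pOf_nonneg L ν A
    rw [abs_le]
    constructor <;> linarith
  rw [Finset.sum_add_distrib, sum_pOf, sum_pOf] at h
  linarith

variable {γ : ℝ}

theorem approx_mono (hγ0 : 0 < γ) {ε ε' : ℝ} (hle : ε ≤ ε') {μ ν : ProbDist S}
    (h : ApproxBisimilar M γ ε μ ν) : ApproxBisimilar M γ ε' μ ν := by
  obtain ⟨R, hR, hr⟩ := h
  refine ⟨fun δ x y => ∃ δ', δ' ≤ δ ∧ R δ' x y, ⟨?_, ?_⟩, ⟨ε, hle, hr⟩⟩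
  · rintro δ x y ⟨δ', hδ', hrr⟩; exact ⟨δ', hδ', hR.1 δ' hrr⟩
  · rintro δ x y ⟨δ', hδ', hrr⟩
    obtain ⟨hd, hmatch⟩ := hR.2 δ' x y hrr
    refine ⟨hd.trans hδ', fun a μ' hμ' => ?_⟩
    obtain ⟨ν', hν', hr'⟩ := hmatch a μ' hμ'
    exact ⟨ν', hν', ⟨δ' / γ, (div_le_div_iff_of_pos_right hγ0).mpr hδ', hr'⟩⟩

theorem approx_isBisim : IsApproxBisim M γ (ApproxBisimilar M γ) := by
  constructor
  · rintro ε x y ⟨R, hR, hr⟩; exact ⟨R, hR, hR.1 ε hr⟩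
  · rintro ε x y ⟨R, hR, hr⟩
    obtain ⟨hd, hmatch⟩ := hR.2 ε x y hr
    refine ⟨hd, fun a μ' hμ' => ?_⟩
    obtain ⟨ν', hν', hr'⟩ := hmatch a μ' hμ'
    exact ⟨ν', hν', R, hR, hr'⟩

theorem bisim_one (hM : M.InputEnabled) (hγ0 : 0 < γ) (hγ1 : γ ≤ 1) (μ ν : ProbDist S) :
    ApproxBisimilar M γ 1 μ ν := by
  refine ⟨fun ε _ _ => 1 ≤ ε, ⟨fun ε x y h => h, ?_⟩, le_refl 1⟩
  intro ε x y hε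
  refine ⟨(dAP_le_one M.L x y).trans hε, fun a μ' _ => ?_⟩
  obtain ⟨ν', hν'⟩ := exists_lifted M hM y a
  refine ⟨ν', hν', ?_⟩
  show (1:ℝ) ≤ ε / γ
  rw [le_div_iff₀ hγ0]
  nlinarith

theorem isClosed_approx (hM : M.InputEnabled) (hγ0 : 0 < γ) (ε : ℝ) :
    IsClosed {p : ProbDist S × ProbDist S | ApproxBisimilar M γ ε p.1 p.2} := by
  classical
  set B : ℝ → ProbDist S → ProbDist S → Prop := fun δ x y =>
    (x, y) ∈ closure {p : ProbDist S × ProbDist S | ApproxBisimilar M γ δ p.1 p.2} with hB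
  have hBbisim : IsApproxBisim M γ B := by
    constructor
    · intro δ x y h
      obtain ⟨p, hmem, hp⟩ := mem_closure_iff_seq_limit.mp h
      apply mem_closure_iff_seq_limit.mpr
      refine ⟨fun n => ((p n).2, (p n).1), fun n => (approx_isBisim M).1 δ (hmem n), ?_⟩
      exact Filter.Tendsto.prodMk_nhds ((continuous_snd.tendsto (x, y)).comp hp)
        ((continuous_fst.tendsto (x, y)).comp hp)
    · intro δ x y h
      obtain ⟨p, hmem, hp⟩ := mem_closure_iff_seq_limit.mp h
      have hx : Tendsto (fun n => (p n).1) atTop (𝓝 x) := (continuous_fst.tendsto (x, y)).comp hp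
      have hy : Tendsto (fun n => (p n).2) atTop (𝓝 y) := (continuous_snd.tendsto (x, y)).comp hp
      constructor
      · have hd : ∀ n, dAP M.L (p n).1 (p n).2 ≤ δ := fun n =>
          ((approx_isBisim M).2 δ _ _ (hmem n)).1
        have ht : Tendsto (fun n => dAP M.L (p n).1 (p n).2) atTop (𝓝 (dAP M.L x y)) :=
          ((continuous_dAP M.L).tendsto (x, y)).comp hp
        exact le_of_tendsto ht (Eventually.of_forall hd)
      · intro a μ' hμ'
        obtain ⟨k, hk1, hk2⟩ := hμ'
        set k' : S → ProbDist S :=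
          fun s => if Combined M s a (k s) then k s else dflt M hM s a with hk'
        have hk'c : ∀ s, Combined M s a (k' s) := by
          intro s; rw [hk']; dsimp only; split
          · assumption
          · exact dflt_combined M hM s a
        have hμ'eq : μ' = mix x k' := by
          apply ProbDist.ext'; funext t
          rw [hk2 t, mix_f]
          refine Finset.sum_congr rfl fun s _ => ?_
          by_cases hc : Combined M s a (k s)
          · rw [hk']; simp [hc]
          · have h0 : x.f s = 0 := by
              by_contra h0
              exact hc (hk1 s (lt_of_le_of_ne (x.nonneg s) (Ne.symm h0)))
            simp [h0]
        have hmatch : ∀ n, ∃ w, Lifted M (p n).2 a w ∧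
            ApproxBisimilar M γ (δ / γ) (mix (p n).1 k') w := fun n =>
          ((approx_isBisim M).2 δ _ _ (hmem n)).2 a (mix (p n).1 k') (lifted_mix M hk'c)
        choose ν' hν'l hν'b using hmatch
        obtain ⟨ν'', φ, hφ, hν''⟩ := CompactSpace.tendsto_subseq ν'
        refine ⟨ν'', lifted_limit M hM (hy.comp hφ.tendsto_atTop) hν''
          (fun n => hν'l (φ n)), ?_⟩
        rw [hB]
        apply mem_closure_iff_seq_limit.mpr
        refine ⟨fun n => (mix (p (φ n)).1 k', ν' (φ n)), fun n => hν'b (φ n), ?_⟩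
        apply Filter.Tendsto.prodMk_nhds
        · rw [hμ'eq]
          apply tendsto_probDist.mpr
          intro t
          simp only [mix_f]
          exact tendsto_finset_sum _ fun s _ =>
            ((tendsto_probDist.mp (hx.comp hφ.tendsto_atTop)) s).mul tendsto_const_nhds
        · exact hν''
  have hsub : closure {p : ProbDist S × ProbDist S | ApproxBisimilar M γ ε p.1 p.2}
      ⊆ {p | ApproxBisimilar M γ ε p.1 p.2} := fun p hp => ⟨B, hBbisim, hp⟩
  have : {p : ProbDist S × ProbDist S | ApproxBisimilar M γ ε p.1 p.2}
      = closure {p : ProbDist S × ProbDist S | ApproxBisimilar M γ ε p.1 p.2} :=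
    Set.Subset.antisymm subset_closure hsub
  rw [this]
  exact isClosed_closure

end Stmt10Aux

open Stmt10Aux Filter Topology in
theorem stmt10 {S Act AP : Type} [Fintype S] [Fintype AP] [DecidableEq AP]
    (M : PA S Act AP) (hM : M.InputEnabled) (γ : ℝ) (hγ0 : 0 < γ) (hγ1 : γ ≤ 1)
    (μ ν : ProbDist S) :
    ApproxBisimilar M γ (Db M γ μ ν) μ ν := by
  classical
  set A := {ε | 0 ≤ ε ∧ ApproxBisimilar M γ ε μ ν} with hA
  have hone : (1:ℝ) ∈ A := ⟨zero_le_one, bisim_one M hM hγ0 hγ1 μ ν⟩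
  have hdbdef : Db M γ μ ν = sInf A := rfl
  have hd0 : 0 ≤ Db M γ μ ν := by
    rw [hdbdef]
    exact le_csInf ⟨1, hone⟩ fun ε hε => hε.1
  set R : ℝ → ProbDist S → ProbDist S → Prop :=
    fun ε x y => ∀ δ, ε < δ → ApproxBisimilar M γ δ x y with hR
  have hRbisim : IsApproxBisim M γ R := by
    constructor
    · intro ε x y h δ hδ
      exact (approx_isBisim M).1 δ (h δ hδ)
    · intro ε x y h
      constructor
      · by_contra hc
        push_neg at hc
        have h1 : ε < (ε + dAP M.L x y) / 2 := by linarith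
        have h2 := ((approx_isBisim M).2 _ x y (h _ h1)).1
        linarith
      · intro a μ' hμ'
        have hseq : ∀ n : ℕ, ∃ w, Lifted M y a w ∧
            ApproxBisimilar M γ ((ε + 1 / ((n:ℝ) + 1)) / γ) μ' w := by
          intro n
          have hpos : ε < ε + 1 / ((n:ℝ) + 1) := by
            have : (0:ℝ) < 1 / ((n:ℝ) + 1) := by positivity
            linarith
          exact ((approx_isBisim M).2 _ x y (h _ hpos)).2 a μ' hμ'
        choose ν' hl hb using hseq
        obtain ⟨ν'', φ, hφ, hν''⟩ := CompactSpace.tendsto_subseq ν'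
        refine ⟨ν'', lifted_limit M hM tendsto_const_nhds hν'' (fun n => hl (φ n)), ?_⟩
        intro δ' hδ'
        have ht : Tendsto (fun n : ℕ => (ε + 1 / ((n:ℝ) + 1)) / γ) atTop (𝓝 (ε / γ)) := by
          have h0 : Tendsto (fun n : ℕ => 1 / ((n:ℝ) + 1)) atTop (𝓝 0) :=
            tendsto_one_div_add_atTop_nhds_zero_nat
          have := ((tendsto_const_nhds (x := ε) (f := atTop (α := ℕ))).add h0).div_const γ
          simpa using this
        have hev : ∀ᶠ n in atTop, (ε + 1 / ((φ n : ℝ) + 1)) / γ ≤ δ' :=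
          (ht.comp hφ.tendsto_atTop).eventually (eventually_le_nhds hδ')
        have hclosed' : IsClosed {z : ProbDist S | ApproxBisimilar M γ δ' μ' z} := by
          have heq : {z : ProbDist S | ApproxBisimilar M γ δ' μ' z}
              = (fun z : ProbDist S => ((μ', z) : ProbDist S × ProbDist S)) ⁻¹'
                {p : ProbDist S × ProbDist S | ApproxBisimilar M γ δ' p.1 p.2} := rfl
          rw [heq]
          exact (isClosed_approx M hM hγ0 δ').preimage (continuous_const.prodMk continuous_id)
        apply hclosed'.mem_of_tendsto hν''
        filter_upwards [hev] with n hn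
        exact approx_mono M hγ0 hn (hb (φ n))
  refine ⟨R, hRbisim, ?_⟩
  intro δ hδ
  rw [hdbdef] at hδ
  obtain ⟨ε₀, hε₀A, hε₀lt⟩ := exists_lt_of_csInf_lt ⟨1, hone⟩ hδ
  exact approx_mono M hγ0 hε₀lt.le hε₀A.2
end

section
/- For every formula φ of the modal logic 𝓛_m, the satisfaction function φ : Dist(S) → [0,1] is continuous, where Dist(S) carries the topology inherited from ℝ^{|S|}. -/
open Finset

/-- Formulas of the modal logic 𝓛_m. -/
inductive Fml (AP Act : Type) : Type 1
  | atom : Finset (Finset AP) → Fml AP Act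
  | oplus : Fml AP Act → Set.Icc (0 : ℝ) 1 → Fml AP Act
  | neg : Fml AP Act → Fml AP Act
  | conj : (I : Type) → (I → Fml AP Act) → Fml AP Act
  | dia : Act → Fml AP Act → Fml AP Act

/-- Discounted satisfaction function of a formula. -/
noncomputable def sat {S Act AP : Type} [Fintype S] (M : PA S Act AP) (γ : ℝ) :
    Fml AP Act → ProbDist S → ℝ
  | .atom B, μ => ∑ A ∈ B, M.probOf μ A
  | .oplus φ p, μ => min (sat M γ φ μ + (p : ℝ)) 1
  | .neg φ, μ => 1 - sat M γ φ μ
  | .conj _ φs, μ => ⨅ i, sat M γ (φs i) μ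
  | .dia a φ, μ => ⨆ μ' ∈ {x | Lifted M μ a x}, γ * sat M γ φ μ'

section Aux
open scoped Classical
variable {S Act AP : Type} [Fintype S] (M : PA S Act AP)

lemma combined_exists (hM : M.InputEnabled) (s : S) (a : Act) :
    ∃ d, Combined M s a d := by
  obtain ⟨ρ, hρ⟩ := hM s a
  exact ⟨ρ, 1, (fun _ => 1), (fun _ => ρ), fun _ => zero_le_one, by simp,
    fun _ => hρ, fun t => by simp⟩

lemma sat_atom_eq (γ : ℝ) (B : Finset (Finset AP)) (μ : ProbDist S) :
    sat M γ (.atom B) μ = ∑ s, if M.L s ∈ B then μ.f s else 0 := by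
  classical
  show (∑ A ∈ B, M.probOf μ A) = _
  unfold PA.probOf pOf ProbDist.pr
  rw [Finset.sum_comm]
  refine Finset.sum_congr rfl fun s _ => ?_
  have : ∀ A : Finset AP, Set.indicator {s | M.L s = A} μ.f s
      = if M.L s = A then μ.f s else 0 := by
    intro A; simp [Set.indicator_apply, Set.mem_setOf_eq]
  simp only [this]
  exact Finset.sum_ite_eq B (M.L s) (fun _ => μ.f s)

lemma sat_bounds (γ : ℝ) (hγ0 : 0 ≤ γ) (hγ1 : γ ≤ 1) (φ : Fml AP Act)
    (μ : ProbDist S) : 0 ≤ sat M γ φ μ ∧ sat M γ φ μ ≤ 1 := by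
  induction φ generalizing μ with
  | atom B =>
    rw [sat_atom_eq]
    constructor
    · exact Finset.sum_nonneg fun s _ => by split <;> simp [μ.nonneg s]
    · calc (∑ s, if M.L s ∈ B then μ.f s else 0) ≤ ∑ s, μ.f s := by
            refine Finset.sum_le_sum fun s _ => ?_
            split <;> simp [μ.nonneg s]
        _ = 1 := μ.sum_one
  | oplus φ p ih =>
    obtain ⟨h0, h1⟩ := ih μ
    refine ⟨le_min (by have := p.2.1; linarith) zero_le_one, min_le_right _ _⟩
  | neg φ ih =>
    obtain ⟨h0, h1⟩ := ih μ
    show 0 ≤ 1 - sat M γ φ μ ∧ 1 - sat M γ φ μ ≤ 1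
    constructor <;> linarith
  | conj I φs ih =>
    show 0 ≤ (⨅ i, sat M γ (φs i) μ) ∧ (⨅ i, sat M γ (φs i) μ) ≤ 1
    refine ⟨Real.iInf_nonneg fun i => (ih i μ).1, ?_⟩
    rcases isEmpty_or_nonempty I with h | h
    · rw [Real.iInf_of_isEmpty]; exact zero_le_one
    · exact ciInf_le_of_le ⟨0, by rintro x ⟨i, rfl⟩; exact (ih i μ).1⟩
        (Classical.arbitrary I) (ih _ μ).2
  | dia a φ ih =>
    show 0 ≤ (⨆ μ' ∈ {x | Lifted M μ a x}, γ * sat M γ φ μ') ∧ _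
    constructor
    · exact Real.iSup_nonneg fun μ' => Real.iSup_nonneg fun _ =>
        mul_nonneg hγ0 (ih μ').1
    · refine Real.iSup_le (fun μ' => Real.iSup_le (fun _ => ?_) zero_le_one)
        zero_le_one
      exact mul_le_one₀ hγ1 (ih μ').1 (ih μ').2

lemma lifted_mono (hM : M.InputEnabled) {μ ν μ' : ProbDist S} {a : Act}
    (h : Lifted M μ a μ') :
    ∃ ν', Lifted M ν a ν' ∧ ∑ t, |μ'.f t - ν'.f t| ≤ ∑ s, |μ.f s - ν.f s| := by
  classical
  obtain ⟨k, hk, hkf⟩ := h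
  choose dflt hdflt using fun s => combined_exists M hM s a
  set k' : S → ProbDist S := fun s => if 0 < μ.f s then k s else dflt s with hk'
  have hC : ∀ s, Combined M s a (k' s) := by
    intro s
    by_cases h : 0 < μ.f s
    · simpa [hk', h] using hk s h
    · simpa [hk', h] using hdflt s
  have hsum : ∀ s : S, ∑ t, (k' s).f t = 1 := fun s => (k' s).sum_one
  refine ⟨⟨fun t => ∑ s, ν.f s * (k' s).f t,
      fun t => Finset.sum_nonneg fun s _ => mul_nonneg (ν.nonneg s) ((k' s).nonneg t),
      ?_⟩, ⟨k', fun s _ => hC s, fun t => rfl⟩, ?_⟩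
  · rw [Finset.sum_comm]
    simp only [← Finset.mul_sum, hsum, mul_one]
    exact ν.sum_one
  · have hμ' : ∀ t, μ'.f t = ∑ s, μ.f s * (k' s).f t := by
      intro t
      rw [hkf t]
      refine Finset.sum_congr rfl fun s _ => ?_
      by_cases h : 0 < μ.f s
      · simp [hk', h]
      · have h0 : μ.f s = 0 := le_antisymm (le_of_not_gt h) (μ.nonneg s)
        simp [h0]
    calc ∑ t, |μ'.f t - (∑ s, ν.f s * (k' s).f t)|
        = ∑ t, |∑ s, (μ.f s - ν.f s) * (k' s).f t| := by
          refine Finset.sum_congr rfl fun t _ => ?_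
          rw [hμ' t, ← Finset.sum_sub_distrib]
          simp [sub_mul]
      _ ≤ ∑ t, ∑ s, |μ.f s - ν.f s| * (k' s).f t := by
          refine Finset.sum_le_sum fun t _ => ?_
          refine (Finset.abs_sum_le_sum_abs _ _).trans ?_
          refine Finset.sum_le_sum fun s _ => ?_
          rw [abs_mul, abs_of_nonneg ((k' s).nonneg t)]
      _ = ∑ s, |μ.f s - ν.f s| := by
          rw [Finset.sum_comm]
          simp only [← Finset.mul_sum, hsum, mul_one]

lemma dia_le (hM : M.InputEnabled) {γ : ℝ} (hγ0 : 0 ≤ γ) (hγ1 : γ ≤ 1)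
    (a : Act) (φ : Fml AP Act)
    (hlip : ∀ μ ν, |sat M γ φ μ - sat M γ φ ν| ≤ ∑ s, |μ.f s - ν.f s|)
    (μ ν : ProbDist S) :
    sat M γ (.dia a φ) μ ≤ sat M γ (.dia a φ) ν + ∑ s, |μ.f s - ν.f s| := by
  have hd : (0:ℝ) ≤ ∑ s, |μ.f s - ν.f s| := Finset.sum_nonneg fun s _ => abs_nonneg _
  have hb : ∀ ρ : ProbDist S, 0 ≤ γ * sat M γ φ ρ ∧ γ * sat M γ φ ρ ≤ 1 := fun ρ =>
    ⟨mul_nonneg hγ0 (sat_bounds M γ hγ0 hγ1 φ ρ).1,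
     mul_le_one₀ hγ1 (sat_bounds M γ hγ0 hγ1 φ ρ).1 (sat_bounds M γ hγ0 hγ1 φ ρ).2⟩
  have hsupν : (0:ℝ) ≤ sat M γ (.dia a φ) ν :=
    (sat_bounds M γ hγ0 hγ1 (.dia a φ) ν).1
  show (⨆ μ' ∈ {x | Lifted M μ a x}, γ * sat M γ φ μ') ≤ _
  refine Real.iSup_le (fun μ' => ?_) (by linarith)
  by_cases hL : Lifted M μ a μ'
  · rw [ciSup_pos (show μ' ∈ {x | Lifted M μ a x} from hL)]
    obtain ⟨ν', hν', hdist⟩ := lifted_mono M hM (ν := ν) hL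
    have h1 : γ * sat M γ φ μ' ≤ γ * sat M γ φ ν' + ∑ s, |μ.f s - ν.f s| := by
      have h2 := (abs_le.mp (hlip μ' ν')).2
      have h3 : (0:ℝ) ≤ ∑ t, |μ'.f t - ν'.f t| :=
        Finset.sum_nonneg fun t _ => abs_nonneg _
      nlinarith
    have h4 : γ * sat M γ φ ν' ≤ sat M γ (.dia a φ) ν := by
      have hbd : BddAbove (Set.range fun ρ : ProbDist S =>
          ⨆ _ : ρ ∈ {x | Lifted M ν a x}, γ * sat M γ φ ρ) := by
        refine ⟨1, ?_⟩
        rintro x ⟨ρ, rfl⟩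
        exact Real.iSup_le (fun _ => (hb ρ).2) zero_le_one
      have := le_ciSup hbd ν'
      rwa [ciSup_pos (show ν' ∈ {x | Lifted M ν a x} from hν')] at this
    linarith
  · rw [show (⨆ _ : μ' ∈ {x | Lifted M μ a x}, γ * sat M γ φ μ') = 0 from by
      haveI : IsEmpty (μ' ∈ {x | Lifted M μ a x}) := ⟨hL⟩
      exact Real.iSup_of_isEmpty _]
    linarith

lemma sat_lip (hM : M.InputEnabled) {γ : ℝ} (hγ0 : 0 ≤ γ) (hγ1 : γ ≤ 1)
    (φ : Fml AP Act) (μ ν : ProbDist S) :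
    |sat M γ φ μ - sat M γ φ ν| ≤ ∑ s, |μ.f s - ν.f s| := by
  induction φ generalizing μ ν with
  | atom B =>
    rw [sat_atom_eq, sat_atom_eq, ← Finset.sum_sub_distrib]
    refine (Finset.abs_sum_le_sum_abs _ _).trans (Finset.sum_le_sum fun s _ => ?_)
    split
    · exact le_refl _
    · simp
  | oplus φ p ih =>
    show |min (sat M γ φ μ + (p:ℝ)) 1 - min (sat M γ φ ν + (p:ℝ)) 1| ≤ _
    have hd : (0:ℝ) ≤ ∑ s, |μ.f s - ν.f s| := Finset.sum_nonneg fun s _ => abs_nonneg _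
    have h := ih μ ν
    rcases le_total (sat M γ φ μ + (p:ℝ)) 1 with h1 | h1 <;>
      rcases le_total (sat M γ φ ν + (p:ℝ)) 1 with h2 | h2 <;>
      rw [abs_le] at h ⊢ <;>
      constructor <;>
      simp [min_eq_left, min_eq_right, h1, h2] <;> linarith [h.1, h.2]
  | neg φ ih =>
    show |(1 - sat M γ φ μ) - (1 - sat M γ φ ν)| ≤ _
    have := ih μ ν
    rw [abs_sub_comm] at this
    simpa using this
  | conj I φs ih =>
    show |(⨅ i, sat M γ (φs i) μ) - ⨅ i, sat M γ (φs i) ν| ≤ _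
    rcases isEmpty_or_nonempty I with h | h
    · rw [Real.iInf_of_isEmpty, Real.iInf_of_isEmpty]
      simpa using Finset.sum_nonneg (s := Finset.univ) fun s _ => abs_nonneg (μ.f s - ν.f s)
    · have key : ∀ μ ν : ProbDist S,
          (⨅ i, sat M γ (φs i) μ) ≤ (⨅ i, sat M γ (φs i) ν) + ∑ s, |μ.f s - ν.f s| := by
        intro μ ν
        have hbd : BddBelow (Set.range fun i => sat M γ (φs i) μ) :=
          ⟨0, by rintro x ⟨i, rfl⟩; exact (sat_bounds M γ hγ0 hγ1 (φs i) μ).1⟩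
        have : ∀ i, (⨅ i, sat M γ (φs i) μ) - (∑ s, |μ.f s - ν.f s|) ≤ sat M γ (φs i) ν := by
          intro i
          have h1 := ciInf_le hbd i
          have h2 := (abs_le.mp (ih i μ ν)).2
          linarith
        have := le_ciInf this
        linarith
      rw [abs_le]
      have k1 := key μ ν
      have k2 := key ν μ
      rw [show (∑ s, |ν.f s - μ.f s|) = ∑ s, |μ.f s - ν.f s| from
        Finset.sum_congr rfl fun s _ => abs_sub_comm _ _] at k2
      constructor <;> linarith
  | dia a φ ih =>
    rw [abs_le]
    have k1 := dia_le M hM hγ0 hγ1 a φ (fun μ ν => ih μ ν) μ ν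
    have k2 := dia_le M hM hγ0 hγ1 a φ (fun μ ν => ih μ ν) ν μ
    rw [show (∑ s, |ν.f s - μ.f s|) = ∑ s, |μ.f s - ν.f s| from
      Finset.sum_congr rfl fun s _ => abs_sub_comm _ _] at k2
    constructor <;> linarith

end Aux
theorem stmt13 {S Act AP : Type} [Fintype S] (M : PA S Act AP) (hM : M.InputEnabled)
    (γ : ℝ) (hγ0 : 0 < γ) (hγ1 : γ ≤ 1) (φ : Fml AP Act) :
    Continuous (sat M γ φ) := by
  rw [continuous_iff_continuousAt]
  intro μ
  have hf : Filter.Tendsto (fun ν : ProbDist S => ν.f) (nhds μ) (nhds μ.f) :=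
    (continuous_induced_dom (f := fun μ : ProbDist S => μ.f)).tendsto μ
  have hg : Continuous (fun x : S → ℝ => ∑ s, |x s - μ.f s|) := by
    refine continuous_finset_sum _ fun s _ => ?_
    exact ((continuous_apply s).sub continuous_const).abs
  have hd : Filter.Tendsto (fun ν : ProbDist S => ∑ s, |ν.f s - μ.f s|)
      (nhds μ) (nhds 0) := by
    have := (hg.tendsto μ.f).comp hf
    simpa [Function.comp_def] using this
  have hsq : Filter.Tendsto (fun ν => sat M γ φ ν - sat M γ φ μ) (nhds μ) (nhds 0) := by
    refine squeeze_zero_norm (fun ν => ?_) hd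
    simpa [Real.norm_eq_abs] using sat_lip M hM hγ0.le hγ1 φ ν μ
  have := hsq.add_const (sat M γ φ μ)
  simpa [ContinuousAt] using this
end
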